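/- Let n ≥ 3 and let h_1,…,h_n : {0,…,9} → ℂ. Then ∑_{ω ∈ Ω_n} ∏_{j=1}^n h_j(ω_j) = ∑_{i=1}^{4} h_1(δ_i) · ∑ { ∏_{j=2}^n h_j(x_j) : x ∈ {0,…,9}^{n-1}, D_{n-1}(x) ≡ r_i (mod 2^{n-1}) }, where r_i = ⌊i·2^{n-1}/5⌋ and δ_i = 2·((i·2^{n-1}) mod 5). -/

import Mathlib

open scoped Classical

noncomputable def Dn (n : ℕ) (x : Fin n → Fin 10) : ℕ :=
  ∑ j : Fin n, 10 ^ (j : ℕ) * (x j : ℕ)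

noncomputable def Omega (n : ℕ) : Finset (Fin n → Fin 10) :=
  Finset.univ.filter (fun x => ∃ k ≥ n, Dn n x % 10 ^ n = 2 ^ k % 10 ^ n)

lemma Dn_succ (m : ℕ) (x : Fin (m+1) → Fin 10) :
    Dn (m+1) x = (x 0 : ℕ) + 10 * Dn m (fun j => x j.succ) := by
  rw [Dn, Fin.sum_univ_succ, Dn, Finset.mul_sum]
  simp only [Fin.val_zero, pow_zero, one_mul, Fin.val_succ]
  congr 1
  refine Finset.sum_congr rfl fun j _ => by ring

lemma Dn_lt (n : ℕ) (x : Fin n → Fin 10) : Dn n x < 10 ^ n := by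
  induction n with
  | zero => simp [Dn]
  | succ m ih =>
    rw [Dn_succ]
    have h1 := ih (fun j => x j.succ)
    have h2 : (x 0 : ℕ) < 10 := (x 0).isLt
    have : (10:ℕ) ^ (m+1) = 10 * 10 ^ m := by ring
    omega

lemma two_pow_cycle (m : ℕ) : ∃ c, 2 ^ (4 * 5 ^ m) = 1 + 5 ^ (m+1) * c ∧ ¬ 5 ∣ c := by
  induction m with
  | zero => exact ⟨3, by norm_num, by norm_num⟩
  | succ m ih =>
    obtain ⟨c, hc, h5⟩ := ih
    refine ⟨c + 5*(2*5^m*c^2 + 10*5^m*5^m*c^3 + 25*(5^m)^3*c^4 + 25*(5^m)^4*c^5), ?_, ?_⟩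
    · have he : 4 * 5 ^ (m+1) = (4 * 5 ^ m) * 5 := by ring
      rw [he, pow_mul, hc]
      ring
    · intro hd; exact h5 (by omega)

lemma divisor_lemma (d e : ℕ) (he : 1 ≤ e) (h4 : d ∣ 4 * 5 ^ e)
    (h2 : ¬ d ∣ 2 * 5 ^ e) (h45 : ¬ d ∣ 4 * 5 ^ (e - 1)) : d = 4 * 5 ^ e := by
  obtain ⟨⟨⟨a, ha⟩, ⟨b, hb⟩⟩, hab⟩ := Nat.dvdProdDvdOfDvdProd h4
  simp only at hab
  obtain ⟨j, hj, rfl⟩ := (Nat.dvd_prime_pow Nat.prime_five).mp hb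
  have hb1 : a ≤ 4 := Nat.le_of_dvd (by norm_num) ha
  have hb2 : 1 ≤ a := Nat.pos_of_dvd_of_pos ha (by norm_num)
  have ha4 : a = 1 ∨ a = 2 ∨ a = 4 := by
    interval_cases a <;> omega
  rcases ha4 with rfl | rfl | rfl
  · exact absurd (hab ▸ mul_dvd_mul (by norm_num : (1:ℕ) ∣ 2) (pow_dvd_pow 5 hj)) h2
  · exact absurd (hab ▸ mul_dvd_mul (by norm_num : (2:ℕ) ∣ 2) (pow_dvd_pow 5 hj)) h2
  · rcases Nat.lt_or_ge j e with hlt | hge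
    · exact absurd (hab ▸ mul_dvd_mul_left 4 (pow_dvd_pow 5 (by omega : j ≤ e - 1))) h45
    · rw [hab, Nat.le_antisymm hj hge]

lemma pow_two_eq_one_iff (M e : ℕ) (hM : 1 < M) :
    (2 : ZMod M) ^ e = 1 ↔ 2 ^ e ≡ 1 [MOD M] := by
  haveI : NeZero M := ⟨by omega⟩
  rw [show ((2:ZMod M)) = ((2:ℕ):ZMod M) by norm_cast, ← Nat.cast_pow,
    show ((1:ZMod M)) = ((1:ℕ):ZMod M) by norm_cast]
  exact ZMod.natCast_eq_natCast_iff _ _ _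

lemma order_two (n : ℕ) (hn : 2 ≤ n) (hc2 : Nat.Coprime 2 (5 ^ n)) :
    orderOf (ZMod.unitOfCoprime 2 hc2 : (ZMod (5 ^ n))ˣ) = 4 * 5 ^ (n - 1) := by
  set u : (ZMod (5^n))ˣ := ZMod.unitOfCoprime 2 hc2 with hu
  haveI : NeZero (5^n) := ⟨pow_ne_zero _ (by norm_num)⟩
  have hM : 1 < 5 ^ n := Nat.one_lt_pow (by omega) (by norm_num)
  have hcard : Fintype.card (ZMod (5^n))ˣ = 4 * 5 ^ (n-1) := by
    rw [ZMod.card_units_eq_totient, Nat.totient_prime_pow Nat.prime_five (by omega : 0 < n)]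
    ring
  have hpow : ∀ e, u ^ e = 1 ↔ 2 ^ e ≡ 1 [MOD 5 ^ n] := by
    intro e
    rw [← pow_two_eq_one_iff _ _ hM]
    constructor
    · intro he
      have := congrArg (Units.val) he
      simpa [hu, ZMod.coe_unitOfCoprime] using this
    · intro he
      ext
      simpa [hu, ZMod.coe_unitOfCoprime] using he
  apply divisor_lemma _ _ (by omega)
  · rw [← hcard]; exact orderOf_dvd_card
  · intro hdvd
    have h1 : 2 ^ (2 * 5 ^ (n-1)) ≡ 1 [MOD 5 ^ n] :=
      (hpow _).mp (orderOf_dvd_iff_pow_eq_one.mp hdvd)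
    have h5 : 2 ^ (2 * 5 ^ (n-1)) ≡ 1 [MOD 5] :=
      h1.of_dvd (dvd_pow_self 5 (by omega))
    obtain ⟨t, ht⟩ : Odd (5 ^ (n-1)) := Odd.pow ⟨2, by norm_num⟩
    have he : 2 ^ (2 * 5 ^ (n-1)) = 16 ^ t * 4 := by
      rw [pow_mul, ht, pow_succ, pow_mul]
      norm_num
    have h16 : (16:ℕ) ^ t * 4 ≡ 1 ^ t * 4 [MOD 5] :=
      Nat.ModEq.mul_right 4 (Nat.ModEq.pow t (by decide))
    rw [he] at h5
    have := (h16.symm.trans h5)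
    simp only [one_pow, one_mul] at this
    exact absurd this (by decide)
  · intro hdvd
    have h1 : 2 ^ (4 * 5 ^ (n-1-1)) ≡ 1 [MOD 5 ^ n] :=
      (hpow _).mp (orderOf_dvd_iff_pow_eq_one.mp hdvd)
    obtain ⟨c, hc, h5c⟩ := two_pow_cycle (n-2)
    have hnn : n - 2 + 1 = n - 1 := by omega
    rw [show n - 1 - 1 = n - 2 by omega, hc, hnn] at h1
    have hdd : 5 ^ n ∣ 5 ^ (n-1) * c := by
      have := (Nat.modEq_iff_dvd' (by omega : 1 ≤ 1 + 5 ^ (n-1) * c)).mp h1.symm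
      simpa using this
    have h5n : (5:ℕ) ^ n = 5 ^ (n-1) * 5 := by
      rw [← pow_succ]; congr 1; omega
    rw [h5n] at hdd
    have hpos : 0 < 5 ^ (n-1) := Nat.pow_pos (by norm_num)
    exact h5c ((Nat.mul_dvd_mul_iff_left hpos).mp hdd)

lemma two_pow_mod_surj (n : ℕ) (hn : 2 ≤ n) (a : ℕ) (ha : ¬ 5 ∣ a) :
    ∃ k ≥ n, 2 ^ k ≡ a [MOD 5 ^ n] := by
  haveI : NeZero (5^n) := ⟨pow_ne_zero _ (by norm_num)⟩
  have hc2 : Nat.Coprime 2 (5 ^ n) :=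
    ((Nat.coprime_primes Nat.prime_two Nat.prime_five).mpr (by norm_num)).pow_right n
  set u : (ZMod (5^n))ˣ := ZMod.unitOfCoprime 2 hc2 with hu
  have hord : orderOf u = 4 * 5 ^ (n-1) := order_two n hn hc2
  have hcard : Fintype.card (ZMod (5^n))ˣ = 4 * 5 ^ (n-1) := by
    rw [ZMod.card_units_eq_totient, Nat.totient_prime_pow Nat.prime_five (by omega : 0 < n)]
    ring
  have htop : Subgroup.zpowers u = ⊤ := by
    apply Subgroup.eq_top_of_card_eq
    rw [Nat.card_zpowers, hord, Nat.card_eq_fintype_card, hcard]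
  have hacop : Nat.Coprime a (5 ^ n) :=
    Nat.Coprime.pow_right _ (Nat.coprime_comm.mp ((Nat.Prime.coprime_iff_not_dvd
      Nat.prime_five).mpr ha))
  set ua : (ZMod (5^n))ˣ := ZMod.unitOfCoprime a hacop with hua
  have hmem : ua ∈ Submonoid.powers u := by
    rw [mem_powers_iff_mem_zpowers, htop]; trivial
  obtain ⟨k0, hk0⟩ := hmem
  have hpos : 0 < 4 * 5 ^ (n-1) := by positivity
  refine ⟨k0 + 4 * 5 ^ (n-1) * n, ?_, ?_⟩
  · calc n ≤ 4 * 5 ^ (n-1) * n := Nat.le_mul_of_pos_left n hpos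
    _ ≤ k0 + 4 * 5 ^ (n-1) * n := Nat.le_add_left _ _
  · have hone : u ^ (4 * 5 ^ (n-1)) = 1 := by rw [← hord]; exact pow_orderOf_eq_one u
    have heq : u ^ (k0 + 4 * 5 ^ (n-1) * n) = ua := by
      rw [pow_add, pow_mul, hone, one_pow, mul_one]; exact hk0
    have hval := congrArg (Units.val) heq
    simp only [Units.val_pow_eq_pow_val, hu, hua, ZMod.coe_unitOfCoprime] at hval
    have : ((2 ^ (k0 + 4 * 5 ^ (n-1) * n) : ℕ) : ZMod (5^n)) = ((a:ℕ) : ZMod (5^n)) := by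
      push_cast
      exact hval
    exact (ZMod.natCast_eq_natCast_iff _ _ _).mp this

lemma mem_Omega_iff (n : ℕ) (hn : 2 ≤ n) (x : Fin n → Fin 10) :
    x ∈ Omega n ↔ 2 ^ n ∣ Dn n x ∧ ¬ 5 ∣ Dn n x := by
  have hten : (10:ℕ) ^ n = 2 ^ n * 5 ^ n := by rw [← mul_pow]; norm_num
  have hDlt := Dn_lt n x
  have hDmod : Dn n x % 10 ^ n = Dn n x := Nat.mod_eq_of_lt hDlt
  rw [Omega, Finset.mem_filter]
  simp only [Finset.mem_univ, true_and, hDmod]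
  constructor
  · rintro ⟨k, hk, he⟩
    have h2_10 : (2:ℕ) ^ n ∣ 10 ^ n := hten ▸ dvd_mul_right _ _
    have h5_10 : (5:ℕ) ∣ 10 ^ n := dvd_pow (by norm_num) (by omega)
    constructor
    · rw [he]
      exact (Nat.dvd_mod_iff h2_10).mpr (pow_dvd_pow 2 hk)
    · rw [he]
      intro hd
      have : (5:ℕ) ∣ 2 ^ k := (Nat.dvd_mod_iff h5_10).mp hd
      have := Nat.Prime.dvd_of_dvd_pow Nat.prime_five this
      norm_num at this
  · rintro ⟨h2, h5⟩
    obtain ⟨k, hk, hmod5⟩ := two_pow_mod_surj n hn (Dn n x) h5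
    refine ⟨k, hk, ?_⟩
    have hm2 : 2 ^ k ≡ Dn n x [MOD 2 ^ n] := by
      have a1 : 2 ^ k ≡ 0 [MOD 2 ^ n] := (Nat.modEq_zero_iff_dvd).mpr (pow_dvd_pow 2 hk)
      have a2 : Dn n x ≡ 0 [MOD 2 ^ n] := (Nat.modEq_zero_iff_dvd).mpr h2
      exact a1.trans a2.symm
    have hcop : Nat.Coprime (2 ^ n) (5 ^ n) :=
      ((Nat.coprime_primes Nat.prime_two Nat.prime_five).mpr (by norm_num)).pow n n
    have := (Nat.modEq_and_modEq_iff_modEq_mul hcop).mp ⟨hm2, hmod5⟩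
    rw [← hten] at this
    have h' := this.symm
    rwa [Nat.ModEq, hDmod] at h'

lemma key_mod (m i D : ℕ) :
    2 ^ (m+1) ∣ (2 * (i * 2 ^ m % 5) + 10 * D) ↔ D % 2 ^ m = i * 2 ^ m / 5 % 2 ^ m := by
  set v : ℕ := 2 * (i * 2 ^ m % 5) with hv
  set r : ℕ := i * 2 ^ m / 5 with hr
  have hvr : v + 10 * r = i * 2 ^ (m+1) := by
    have hdm := Nat.div_add_mod (i * 2 ^ m) 5
    have hp : (2:ℕ) ^ (m+1) = 2 ^ m * 2 := pow_succ 2 m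
    set t := i * 2 ^ m with ht
    rw [hp, ← mul_assoc]
    omega
  have hdvdvr : 2 ^ (m+1) ∣ v + 10 * r := ⟨i, by rw [hvr]; ring⟩
  have hgcd : Nat.gcd (2 ^ (m+1)) 10 = 2 := by
    have h1 : (2:ℕ) ^ (m+1) = 2 * 2 ^ m := by rw [pow_succ]; ring
    rw [h1, show (10:ℕ) = 2 * 5 by norm_num, Nat.gcd_mul_left]
    have h2 : Nat.gcd (2 ^ m) 5 = 1 := Nat.Coprime.pow_left m (by norm_num)
    rw [h2]
  have hpos : 0 < 2 ^ (m+1) := Nat.pow_pos (by norm_num)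
  constructor
  · intro hdvd
    have e1 : v + 10 * D ≡ v + 10 * r [MOD 2 ^ (m+1)] :=
      ((Nat.modEq_zero_iff_dvd).mpr hdvd).trans ((Nat.modEq_zero_iff_dvd).mpr hdvdvr).symm
    have e2 : 10 * D ≡ 10 * r [MOD 2 ^ (m+1)] := Nat.ModEq.add_left_cancel' v e1
    have e3 := Nat.ModEq.cancel_left_div_gcd hpos e2
    rw [hgcd] at e3
    have h4 : (2:ℕ) ^ (m+1) / 2 = 2 ^ m := by
      rw [pow_succ]
      exact Nat.mul_div_cancel _ (by norm_num)
    rwa [h4] at e3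
  · intro hmod
    have e1 : 10 * D ≡ 10 * r [MOD 10 * 2 ^ m] := Nat.ModEq.mul_left' (c := 10) hmod
    have e2 : 10 * D ≡ 10 * r [MOD 2 ^ (m+1)] := by
      refine e1.of_dvd ?_
      have h1 : (2:ℕ) ^ (m+1) = 2 * 2 ^ m := by rw [pow_succ]; ring
      rw [h1]
      exact mul_dvd_mul_right (by norm_num) _
    have e3 : v + 10 * D ≡ v + 10 * r [MOD 2 ^ (m+1)] := Nat.ModEq.add_left v e2
    have := e3.trans ((Nat.modEq_zero_iff_dvd).mpr hdvdvr)
    exact (Nat.modEq_zero_iff_dvd).mp this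

lemma five_not_dvd_mul (m i : ℕ) (hi1 : 1 ≤ i) (hi4 : i ≤ 4) : ¬ 5 ∣ i * 2 ^ m := by
  intro hd
  rcases (Nat.Prime.dvd_mul Nat.prime_five).mp hd with h | h
  · omega
  · have := Nat.Prime.dvd_of_dvd_pow Nat.prime_five h
    norm_num at this

theorem matrix_representation (n : ℕ) (hn : 3 ≤ n) (h : ℕ → ℕ → ℂ) :
    (∑ ω ∈ Omega n, ∏ j : Fin n, h ((j : ℕ) + 1) (ω j))
      = ∑ i ∈ Finset.Icc 1 4,
          h 1 (2 * (i * 2 ^ (n - 1) % 5)) *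
            ∑ x ∈ Finset.univ.filter
                (fun x : Fin (n - 1) → Fin 10 =>
                  Dn (n - 1) x % 2 ^ (n - 1) = i * 2 ^ (n - 1) / 5 % 2 ^ (n - 1)),
              ∏ j : Fin (n - 1), h ((j : ℕ) + 2) (x j) := by
  obtain ⟨m, rfl⟩ : ∃ m, n = m + 1 := ⟨n - 1, by omega⟩
  have hm : 2 ≤ m := by omega
  simp only [Nat.add_sub_cancel]
  -- notation
  set P : (Fin m → Fin 10) → ℂ := fun y => ∏ j : Fin m, h ((j : ℕ) + 2) (y j) with hP
  have hιlt : ∀ i : ℕ, 2 * (i * 2 ^ m % 5) < 10 := fun i => by omega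
  set ι : ℕ → Fin 10 := fun i => ⟨2 * (i * 2 ^ m % 5), hιlt i⟩ with hι
  -- Step 1: rewrite the LHS as a double sum with if-then-else
  have step1 : (∑ ω ∈ Omega (m+1), ∏ j : Fin (m+1), h ((j : ℕ) + 1) (ω j))
      = ∑ d : Fin 10, ∑ y : Fin m → Fin 10,
          (if 2 ^ (m+1) ∣ ((d : ℕ) + 10 * Dn m y) ∧ ¬ (5:ℕ) ∣ (d : ℕ)
           then h 1 (d : ℕ) * P y else 0) := by
    have hOm : Omega (m+1) = Finset.univ.filter
        (fun x : Fin (m+1) → Fin 10 => 2 ^ (m+1) ∣ Dn (m+1) x ∧ ¬ 5 ∣ Dn (m+1) x) := by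
      ext x
      rw [mem_Omega_iff (m+1) (by omega) x, Finset.mem_filter]
      simp
    rw [hOm, Finset.sum_filter]
    rw [← Equiv.sum_comp (Fin.consEquiv (fun _ : Fin (m+1) => Fin 10))]
    rw [Fintype.sum_prod_type]
    refine Finset.sum_congr rfl fun d _ => Finset.sum_congr rfl fun y _ => ?_
    have hcons : (Fin.consEquiv (fun _ : Fin (m+1) => Fin 10)) (d, y) = Fin.cons d y := rfl
    rw [hcons]
    have hD : Dn (m+1) (Fin.cons d y) = (d : ℕ) + 10 * Dn m y := by
      rw [Dn_succ]
      simp [Fin.cons_zero, Fin.cons_succ]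
    have hProd : (∏ j : Fin (m+1), h ((j : ℕ) + 1) ((Fin.cons d y : Fin (m+1) → Fin 10) j))
        = h 1 (d : ℕ) * P y := by
      rw [Fin.prod_univ_succ]
      simp [Fin.cons_zero, Fin.cons_succ, Fin.val_succ, hP]
    rw [hD, hProd]
    refine if_congr ?_ rfl rfl
    constructor
    · rintro ⟨ha, hb⟩; exact ⟨ha, fun hc => hb (by omega)⟩
    · rintro ⟨ha, hb⟩; exact ⟨ha, fun hc => hb (by omega)⟩
  rw [step1]
  -- injectivity of ι on Icc 1 4
  have hinj : ∀ i ∈ Finset.Icc 1 4, ∀ j ∈ Finset.Icc 1 4, ι i = ι j → i = j := by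
    intro i hi j hj hij
    simp only [Finset.mem_Icc] at hi hj
    have hval : 2 * (i * 2 ^ m % 5) = 2 * (j * 2 ^ m % 5) := congrArg Fin.val hij
    have hmeq : i * 2 ^ m ≡ j * 2 ^ m [MOD 5] := by
      unfold Nat.ModEq; omega
    have hcop : Nat.Coprime (2 ^ m) 5 := Nat.Coprime.pow_left m (by norm_num)
    have := Nat.ModEq.cancel_right_of_coprime hcop.symm hmeq
    unfold Nat.ModEq at this
    omega
  -- the image of ι is {2,4,6,8}
  have himg : (Finset.Icc 1 4).image ι = ({2, 4, 6, 8} : Finset (Fin 10)) := by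
    apply Finset.eq_of_subset_of_card_le
    · intro b hb
      obtain ⟨i, hi, rfl⟩ := Finset.mem_image.mp hb
      simp only [Finset.mem_Icc] at hi
      have h5 : ¬ 5 ∣ i * 2 ^ m := five_not_dvd_mul m i hi.1 hi.2
      have hne : i * 2 ^ m % 5 ≠ 0 := fun hc => h5 (Nat.dvd_of_mod_eq_zero hc)
      have hlt : i * 2 ^ m % 5 < 5 := Nat.mod_lt _ (by norm_num)
      simp only [Finset.mem_insert, Finset.mem_singleton, Fin.ext_iff, hι]
      omega
    · rw [Finset.card_image_of_injOn hinj, Nat.card_Icc]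
      decide
  -- restrict the d-sum to the image
  have step2 : ∀ d : Fin 10, d ∉ (Finset.Icc 1 4).image ι →
      (∑ y : Fin m → Fin 10,
        (if 2 ^ (m+1) ∣ ((d : ℕ) + 10 * Dn m y) ∧ ¬ (5:ℕ) ∣ (d : ℕ)
         then h 1 (d : ℕ) * P y else 0)) = 0 := by
    intro d hd
    rw [himg] at hd
    apply Finset.sum_eq_zero
    intro y _
    rw [if_neg]
    rintro ⟨ha, hb⟩
    have h2 : 2 ∣ (d : ℕ) := by
      have : (2:ℕ) ∣ 2 ^ (m+1) := dvd_pow_self 2 (by omega)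
      have := this.trans ha
      omega
    have hlt : (d : ℕ) < 10 := d.isLt
    apply hd
    simp only [Finset.mem_insert, Finset.mem_singleton, Fin.ext_iff]
    omega
  rw [← Finset.sum_subset (Finset.subset_univ ((Finset.Icc 1 4).image ι))
    (fun d _ hd => step2 d hd)]
  rw [Finset.sum_image hinj]
  -- per-index identification
  refine Finset.sum_congr rfl fun i hi => ?_
  simp only [Finset.mem_Icc] at hi
  have h5 : ¬ 5 ∣ i * 2 ^ m := five_not_dvd_mul m i hi.1 hi.2
  have hne : i * 2 ^ m % 5 ≠ 0 := fun hc => h5 (Nat.dvd_of_mod_eq_zero hc)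
  have hlt : i * 2 ^ m % 5 < 5 := Nat.mod_lt _ (by norm_num)
  have hval : ((ι i : Fin 10) : ℕ) = 2 * (i * 2 ^ m % 5) := rfl
  have h5d : ¬ (5:ℕ) ∣ ((ι i : Fin 10) : ℕ) := by
    rw [hval]; omega
  calc (∑ y : Fin m → Fin 10,
          (if 2 ^ (m+1) ∣ (((ι i : Fin 10) : ℕ) + 10 * Dn m y) ∧ ¬ (5:ℕ) ∣ ((ι i : Fin 10) : ℕ)
           then h 1 ((ι i : Fin 10) : ℕ) * P y else 0))
      = ∑ y : Fin m → Fin 10,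
          (if Dn m y % 2 ^ m = i * 2 ^ m / 5 % 2 ^ m
           then h 1 (2 * (i * 2 ^ m % 5)) * P y else 0) := by
        refine Finset.sum_congr rfl fun y _ => ?_
        rw [hval]
        refine if_congr ?_ rfl rfl
        constructor
        · rintro ⟨ha, -⟩
          exact (key_mod m i (Dn m y)).mp ha
        · intro hb
          exact ⟨(key_mod m i (Dn m y)).mpr hb, h5d⟩
    _ = h 1 (2 * (i * 2 ^ m % 5)) *
          ∑ x ∈ Finset.univ.filter
            (fun x : Fin m → Fin 10 => Dn m x % 2 ^ m = i * 2 ^ m / 5 % 2 ^ m), P x := by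
        rw [Finset.sum_filter, Finset.mul_sum]
        refine Finset.sum_congr rfl fun y _ => ?_
        rw [mul_ite, mul_zero]
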